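/- For every n ≥ 1, the subalgebra of D_{2n}-invariant polynomials in ℂ[x,y] is generated by xy and x^n + y^n; that is, a polynomial f ∈ ℂ[x,y] is fixed by both automorphisms σ and τ if and only if f lies in the ℂ-subalgebra generated by xy and x^n + y^n, so ℂ[x,y]^{D_{2n}} = ℂ[xy, x^n + y^n]. -/

import Mathlib

open MvPolynomial

/-- The algebra automorphism `σ : x ↦ εx, y ↦ ε⁻¹y` of `ℂ[x,y]`. -/
noncomputable def sigmaA (ε : ℂ) : MvPolynomial (Fin 2) ℂ →ₐ[ℂ] MvPolynomial (Fin 2) ℂ :=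
  aeval ![C ε * X 0, C ε⁻¹ * X 1]

/-- The algebra automorphism `τ : x ↦ y, y ↦ x` of `ℂ[x,y]`. -/
noncomputable def tauA : MvPolynomial (Fin 2) ℂ →ₐ[ℂ] MvPolynomial (Fin 2) ℂ :=
  aeval ![X 1, X 0]

private lemma monomial_eq_two (d : Fin 2 →₀ ℕ) (c : ℂ) :
    (monomial d c : MvPolynomial (Fin 2) ℂ) = C c * X 0 ^ d 0 * X 1 ^ d 1 := by
  rw [monomial_eq, Finsupp.prod_fintype _ _ (fun i => pow_zero _), Fin.prod_univ_two, mul_assoc]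

private lemma sigmaA_monomial (ε : ℂ) (s : Fin 2 →₀ ℕ) (c : ℂ) :
    sigmaA ε (monomial s c) = monomial s (ε ^ (s 0) * ε⁻¹ ^ (s 1) * c) := by
  rw [sigmaA, aeval_monomial, Finsupp.prod_fintype _ _ (fun i => pow_zero _),
    Fin.prod_univ_two, monomial_eq_two]
  simp only [Matrix.cons_val_zero, Matrix.cons_val_one, Matrix.head_cons, mul_pow, ← C_pow,
    algebraMap_eq, C_mul]
  ring

private lemma coeff_sigmaA (ε : ℂ) (f : MvPolynomial (Fin 2) ℂ) (d : Fin 2 →₀ ℕ) :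
    coeff d (sigmaA ε f) = ε ^ (d 0) * ε⁻¹ ^ (d 1) * coeff d f := by
  induction f using MvPolynomial.induction_on' with
  | monomial s c =>
    rw [sigmaA_monomial, coeff_monomial, coeff_monomial]
    split_ifs with h
    · subst h; rfl
    · ring
  | add p q hp hq =>
    rw [map_add, coeff_add, coeff_add, hp, hq]; ring

/-- The swap of exponents. -/
private noncomputable def sw (d : Fin 2 →₀ ℕ) : Fin 2 →₀ ℕ :=
  Finsupp.mapDomain (Equiv.swap (0 : Fin 2) 1) d

private lemma sw_apply0 (d : Fin 2 →₀ ℕ) : sw d 0 = d 1 := by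
  have := Finsupp.mapDomain_apply (Equiv.injective (Equiv.swap (0 : Fin 2) 1)) d 1
  simp only [Equiv.swap_apply_right] at this
  exact this

private lemma sw_apply1 (d : Fin 2 →₀ ℕ) : sw d 1 = d 0 := by
  have := Finsupp.mapDomain_apply (Equiv.injective (Equiv.swap (0 : Fin 2) 1)) d 0
  simp only [Equiv.swap_apply_left] at this
  exact this

private lemma sw_sw (d : Fin 2 →₀ ℕ) : sw (sw d) = d := by
  rw [sw, sw, ← Finsupp.mapDomain_comp]
  have h : (⇑(Equiv.swap (0 : Fin 2) 1) ∘ ⇑(Equiv.swap (0 : Fin 2) 1)) = id := by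
    ext x; simp
  rw [h, Finsupp.mapDomain_id]

private lemma tauA_eq_rename :
    tauA = (rename (Equiv.swap (0 : Fin 2) 1) : MvPolynomial (Fin 2) ℂ →ₐ[ℂ] _) := by
  apply MvPolynomial.algHom_ext
  intro i
  fin_cases i <;> simp [tauA]

private lemma coeff_tauA (f : MvPolynomial (Fin 2) ℂ) (d : Fin 2 →₀ ℕ) :
    coeff (sw d) (tauA f) = coeff d f := by
  rw [tauA_eq_rename]
  exact coeff_rename_mapDomain _ (Equiv.injective _) f d

private lemma powsum_mem (n k : ℕ) :
    (X 0 : MvPolynomial (Fin 2) ℂ) ^ (n * k) + X 1 ^ (n * k) ∈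
      Algebra.adjoin ℂ {(X 0 * X 1 : MvPolynomial (Fin 2) ℂ), X 0 ^ n + X 1 ^ n} := by
  induction k using Nat.strong_induction_on with
  | _ k ih =>
    match k with
    | 0 =>
      simp only [Nat.mul_zero, pow_zero]
      exact add_mem (one_mem _) (one_mem _)
    | 1 =>
      simp only [Nat.mul_one]
      exact Algebra.subset_adjoin (by simp)
    | (m + 2) =>
      have h1 := ih (m + 1) (by omega)
      have h2 := ih m (by omega)
      have key : (X 0 : MvPolynomial (Fin 2) ℂ) ^ (n * (m + 2)) + X 1 ^ (n * (m + 2)) =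
          (X 0 ^ n + X 1 ^ n) * (X 0 ^ (n * (m + 1)) + X 1 ^ (n * (m + 1))) -
            (X 0 * X 1) ^ n * (X 0 ^ (n * m) + X 1 ^ (n * m)) := by ring
      rw [key]
      exact sub_mem
        (mul_mem (Algebra.subset_adjoin (by simp)) h1)
        (mul_mem (pow_mem (Algebra.subset_adjoin (by simp)) n) h2)

private lemma pair_mem_aux (n : ℕ) (a b : ℕ) (h : a ≡ b [MOD n]) (hab : b ≤ a) :
    (X 0 : MvPolynomial (Fin 2) ℂ) ^ a * X 1 ^ b + X 0 ^ b * X 1 ^ a ∈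
      Algebra.adjoin ℂ {(X 0 * X 1 : MvPolynomial (Fin 2) ℂ), X 0 ^ n + X 1 ^ n} := by
  obtain ⟨k, hk⟩ := (Nat.modEq_iff_dvd' hab).mp h.symm
  have ha : a = b + n * k := by omega
  subst ha
  have key : (X 0 : MvPolynomial (Fin 2) ℂ) ^ (b + n * k) * X 1 ^ b +
      X 0 ^ b * X 1 ^ (b + n * k) =
      (X 0 * X 1) ^ b * (X 0 ^ (n * k) + X 1 ^ (n * k)) := by ring
  rw [key]
  exact mul_mem (pow_mem (Algebra.subset_adjoin (by simp)) b) (powsum_mem n k)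

private lemma pair_mem (n : ℕ) (a b : ℕ) (h : a ≡ b [MOD n]) :
    (X 0 : MvPolynomial (Fin 2) ℂ) ^ a * X 1 ^ b + X 0 ^ b * X 1 ^ a ∈
      Algebra.adjoin ℂ {(X 0 * X 1 : MvPolynomial (Fin 2) ℂ), X 0 ^ n + X 1 ^ n} := by
  rcases le_total b a with hab | hab
  · exact pair_mem_aux n a b h hab
  · have := pair_mem_aux n b a h.symm hab
    rw [add_comm (X 0 ^ b * X 1 ^ a)] at this
    exact this

/-- `ℂ[x,y]^{D_{2n}} = ℂ[xy, xⁿ + yⁿ]`. -/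
theorem dihedral_invariant_ring (n : ℕ) (hn : 1 ≤ n) (ε : ℂ) (hε : IsPrimitiveRoot ε n)
    (f : MvPolynomial (Fin 2) ℂ) :
    (sigmaA ε f = f ∧ tauA f = f) ↔
      f ∈ Algebra.adjoin ℂ
        {(X 0 * X 1 : MvPolynomial (Fin 2) ℂ), X 0 ^ n + X 1 ^ n} := by
  have hε0 : ε ≠ 0 := hε.ne_zero (by omega)
  have hεn : ε ^ n = 1 := hε.pow_eq_one
  constructor
  · rintro ⟨hσ, hτ⟩
    have hswc : ∀ d, coeff (sw d) f = coeff d f := by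
      intro d
      conv_lhs => rw [← hτ]
      exact coeff_tauA f d
    -- from equal powers of ε to congruence
    have keymod : ∀ a b : ℕ, b ≤ a → ε ^ a = ε ^ b → a ≡ b [MOD n] := by
      intro a b hba heq
      have hb : ε ^ b ≠ 0 := pow_ne_zero _ hε0
      have h1 : ε ^ (a - b) * ε ^ b = 1 * ε ^ b := by
        rw [← pow_add, Nat.sub_add_cancel hba, heq, one_mul]
      have h2 : ε ^ (a - b) = 1 := mul_right_cancel₀ hb h1
      have hdvd : n ∣ a - b := hε.pow_eq_one_iff_dvd _ |>.mp h2
      exact ((Nat.modEq_iff_dvd' hba).mpr hdvd).symm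
    -- σ-invariance: exponents congruent mod n on the support
    have hmod : ∀ d ∈ f.support, (d 0) ≡ (d 1) [MOD n] := by
      intro d hd
      have hc : coeff d f ≠ 0 := by simpa using hd
      have h1 : ε ^ (d 0) * ε⁻¹ ^ (d 1) * coeff d f = 1 * coeff d f := by
        rw [← coeff_sigmaA, hσ, one_mul]
      have h2 : ε ^ (d 0) * ε⁻¹ ^ (d 1) = 1 := mul_right_cancel₀ hc h1
      have h3 : ε ^ (d 0) = ε ^ (d 1) := by
        rw [inv_pow] at h2
        exact (mul_inv_eq_one₀ (pow_ne_zero _ hε0)).mp h2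
      rcases le_total (d 1) (d 0) with h | h
      · exact keymod _ _ h h3
      · exact (keymod _ _ h h3.symm).symm
    -- each symmetrized pair of monomials lies in the adjoin
    have hterm : ∀ d ∈ f.support,
        (monomial d (coeff d f) + monomial (sw d) (coeff d f) : MvPolynomial (Fin 2) ℂ) ∈
          Algebra.adjoin ℂ {(X 0 * X 1 : MvPolynomial (Fin 2) ℂ), X 0 ^ n + X 1 ^ n} := by
      intro d hd
      rw [monomial_eq_two, monomial_eq_two, sw_apply0, sw_apply1, mul_assoc, mul_assoc, ← mul_add]
      exact mul_mem (Subalgebra.algebraMap_mem _ _) (pair_mem n _ _ (hmod d hd))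
    have hswmem : ∀ d, d ∈ f.support → sw d ∈ f.support := by
      intro d hd
      simp only [MvPolynomial.mem_support_iff] at hd ⊢
      rwa [hswc]
    have hsum : ∑ d ∈ f.support, monomial (sw d) (coeff d f) = f := by
      have := Finset.sum_nbij' (i := sw) (j := sw)
        (s := f.support) (t := f.support)
        (f := fun d => (monomial (sw d) (coeff d f) : MvPolynomial (Fin 2) ℂ))
        (g := fun d => (monomial d (coeff d f) : MvPolynomial (Fin 2) ℂ))
        hswmem hswmem
        (fun d _ => sw_sw d)
        (fun d _ => sw_sw d)
        (fun d _ => by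
          show (monomial (sw d)) (coeff d f) = (monomial (sw d)) (coeff (sw d) f)
          rw [hswc])
      rw [this, ← MvPolynomial.as_sum]
    have h2f : (2 : ℂ) • f = ∑ d ∈ f.support,
        (monomial d (coeff d f) + monomial (sw d) (coeff d f)) := by
      rw [Finset.sum_add_distrib, hsum, ← MvPolynomial.as_sum, two_smul]
    have h2fmem : (2 : ℂ) • f ∈
        Algebra.adjoin ℂ {(X 0 * X 1 : MvPolynomial (Fin 2) ℂ), X 0 ^ n + X 1 ^ n} := by
      rw [h2f]
      exact Subalgebra.sum_mem _ hterm
    have : f = (2⁻¹ : ℂ) • ((2 : ℂ) • f) := by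
      rw [smul_smul]; norm_num
    rw [this]
    exact Subalgebra.smul_mem _ h2fmem _
  · intro hf
    have key : ∀ (φ : MvPolynomial (Fin 2) ℂ →ₐ[ℂ] MvPolynomial (Fin 2) ℂ),
        φ (X 0 * X 1) = X 0 * X 1 → φ (X 0 ^ n + X 1 ^ n) = X 0 ^ n + X 1 ^ n → φ f = f := by
      intro φ h1 h2
      have heq : Set.EqOn φ (AlgHom.id ℂ _)
          ({(X 0 * X 1 : MvPolynomial (Fin 2) ℂ), X 0 ^ n + X 1 ^ n} :
            Set (MvPolynomial (Fin 2) ℂ)) := by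
        rintro x (rfl | rfl)
        · simpa using h1
        · simpa using h2
      exact AlgHom.eqOn_adjoin_iff.mpr heq hf
    constructor
    · apply key
      · simp only [sigmaA, map_mul, aeval_X]
        simp only [Matrix.cons_val_zero, Matrix.cons_val_one, Matrix.head_cons]
        rw [mul_mul_mul_comm, ← C_mul, mul_inv_cancel₀ hε0, C_1, one_mul]
      · simp only [sigmaA, map_add, map_pow, aeval_X]
        simp only [Matrix.cons_val_zero, Matrix.cons_val_one, Matrix.head_cons]
        rw [mul_pow, mul_pow, ← C_pow, ← C_pow, hεn, inv_pow, hεn]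
        simp
    · apply key
      · simp only [tauA, map_mul, aeval_X]
        simp only [Matrix.cons_val_zero, Matrix.cons_val_one, Matrix.head_cons]
        ring
      · simp only [tauA, map_add, map_pow, aeval_X]
        simp only [Matrix.cons_val_zero, Matrix.cons_val_one, Matrix.head_cons]
        ring
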